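/- (Lemma 2, case 3.) Let μ > 0, ν ∈ (0,1), w_c, w_d > 0 with w_c + w_d = 1, and assume μ + ν ≤ 1. e f(p,β) = w_c ln(pμ + (1−p)β) + w_d ln(pν + (1−p)(1−β)). Then for all (p,β) ∈ [0,1]² with pμ + (1−p)β > 0 and pν + (1−p)(1−β) > 0, we have f(p,β) ≤ f(0, w_c) = w_c ln w_c + w_d ln w_d. -/
import Mathlib


theorem stmt_12 (μ ν wc wd : ℝ) (hμ : 0 < μ) (hν : ν ∈ Set.Ioo (0 : ℝ) 1)
    (hwc : 0 < wc) (hwd : 0 < wd) (hw : wc + wd = 1)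
    (hgain : μ + ν ≤ 1) :
    (∀ p ∈ Set.Icc (0 : ℝ) 1, ∀ β ∈ Set.Icc (0 : ℝ) 1,
      0 < p * μ + (1 - p) * β → 0 < p * ν + (1 - p) * (1 - β) →
      wc * Real.log (p * μ + (1 - p) * β) + wd * Real.log (p * ν + (1 - p) * (1 - β))
        ≤ wc * Real.log (0 * μ + (1 - 0) * wc) + wd * Real.log (0 * ν + (1 - 0) * (1 - wc))) ∧
    wc * Real.log (0 * μ + (1 - 0) * wc) + wd * Real.log (0 * ν + (1 - 0) * (1 - wc))
      = wc * Real.log wc + wd * Real.log wd := by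
  have hwd' : (1 : ℝ) - wc = wd := by linarith
  constructor
  · intro p hp β hβ hx hy
    set x := p * μ + (1 - p) * β with hxdef
    set y := p * ν + (1 - p) * (1 - β) with hydef
    have hsum : x + y ≤ 1 := by
      have h1 : x + y = p * (μ + ν) + (1 - p) := by ring
      nlinarith [hp.1, hp.2, hgain]
    have h1 : Real.log (x / wc) ≤ x / wc - 1 :=
      Real.log_le_sub_one_of_pos (div_pos hx hwc)
    have h2 : Real.log (y / wd) ≤ y / wd - 1 :=
      Real.log_le_sub_one_of_pos (div_pos hy hwd)
    have e1 : Real.log (x / wc) = Real.log x - Real.log wc :=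
      Real.log_div hx.ne' hwc.ne'
    have e2 : Real.log (y / wd) = Real.log y - Real.log wd :=
      Real.log_div hy.ne' hwd.ne'
    have key : wc * (Real.log x - Real.log wc) + wd * (Real.log y - Real.log wd) ≤ 0 := by
      have t1 : wc * Real.log (x / wc) ≤ wc * (x / wc - 1) :=
        mul_le_mul_of_nonneg_left h1 hwc.le
      have t2 : wd * Real.log (y / wd) ≤ wd * (y / wd - 1) :=
        mul_le_mul_of_nonneg_left h2 hwd.le
      have : wc * (x / wc - 1) + wd * (y / wd - 1) = x + y - 1 := by
        field_simp
        linarith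
      rw [e1] at t1; rw [e2] at t2
      linarith
    simp only [zero_mul, zero_add, sub_zero, one_mul, hwd']
    linarith
  · simp [hwd']
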